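/- An invertible matrix A ∈ M_n(ℂ) is similar to a weighted permutation if and only if A is diagonalizable. -/

import Mathlib

open Matrix

def IsWeightedPerm {n : ℕ} (A : Matrix (Fin n) (Fin n) ℂ) : Prop :=
  (∀ i j₁ j₂, A i j₁ ≠ 0 → A i j₂ ≠ 0 → j₁ = j₂) ∧
  (∀ j i₁ i₂, A i₁ j ≠ 0 → A i₂ j ≠ 0 → i₁ = i₂)

lemma wp_pow_diagonal {n : ℕ} (B : Matrix (Fin n) (Fin n) ℂ) (hB : IsUnit B)
    (h : IsWeightedPerm B) :
    ∃ (m : ℕ) (v : Fin n → ℂ), 0 < m ∧ (∀ i, v i ≠ 0) ∧ B ^ m = Matrix.diagonal v := by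
  classical
  have hcol : ∀ j, ∃ i, B i j ≠ 0 := by
    intro j
    by_contra hc
    push_neg at hc
    have : B.det = 0 := Matrix.det_eq_zero_of_column_eq_zero j hc
    rw [Matrix.isUnit_iff_isUnit_det] at hB
    simp [this] at hB
  choose g hg using hcol
  have hginj : Function.Injective g := by
    intro j₁ j₂ hj
    exact h.1 (g j₁) j₁ j₂ (hg j₁) (hj ▸ hg j₂)
  let σ : Equiv.Perm (Fin n) := Equiv.ofBijective g ((Finite.injective_iff_bijective).mp hginj)
  have hσ : ∀ j, σ j = g j := fun j => rfl
  have hzero : ∀ i j, i ≠ g j → B i j = 0 := by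
    intro i j hij
    by_contra hBij
    exact hij (h.2 j i (g j) hBij (hg j))
  have key : ∀ k : ℕ, ∃ v : Fin n → ℂ, (∀ j, v j ≠ 0) ∧
      ∀ i j, (B ^ k) i j = if i = (σ ^ k) j then v j else 0 := by
    intro k
    induction k with
    | zero =>
      exact ⟨fun _ => 1, fun _ => one_ne_zero, fun i j => by simp [Matrix.one_apply, eq_comm]⟩
    | succ k ih =>
      obtain ⟨v, hv, hvB⟩ := ih
      refine ⟨fun j => v (σ j) * B (g j) j, fun j => mul_ne_zero (hv _) (hg j), fun i j => ?_⟩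
      rw [pow_succ, Matrix.mul_apply]
      rw [Finset.sum_eq_single (g j) ?_ (by simp)]
      · rw [hvB]
        have hpow : (σ ^ (k + 1)) j = (σ ^ k) (σ j) := by
          rw [pow_succ, Equiv.Perm.mul_apply]
        rw [hpow, hσ]
        split_ifs <;> simp [hσ, mul_comm]
      · intro l _ hl
        rw [hzero _ _ hl, mul_zero]
  obtain ⟨v, hv, hvB⟩ := key (orderOf σ)
  refine ⟨orderOf σ, v, orderOf_pos σ, hv, ?_⟩
  ext i j
  rw [hvB, pow_orderOf_eq_one σ]
  by_cases hij : i = j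
  · subst hij; simp [Matrix.diagonal_apply_eq]
  · simp [Matrix.diagonal_apply_ne _ hij, hij, Ne.symm hij]
open Polynomial Module

lemma pow_diag_diagonalizable {n : ℕ} (B : Matrix (Fin n) (Fin n) ℂ)
    (m : ℕ) (v : Fin n → ℂ) (hm : 0 < m) (hv : ∀ i, v i ≠ 0)
    (hBm : B ^ m = Matrix.diagonal v) :
    ∃ (T : Matrix (Fin n) (Fin n) ℂ) (d : Fin n → ℂ),
      IsUnit T ∧ B = T⁻¹ * Matrix.diagonal d * T := by
  classical
  set s : Finset ℂ := Finset.image v Finset.univ with hs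
  set p : ℂ[X] := ∏ c ∈ s, (X ^ m - C c) with hp
  have hsep : p.Separable := by
    apply Polynomial.separable_prod'
    · intro c hc c' hc' hcc
      refine ⟨C (c' - c)⁻¹, -C (c' - c)⁻¹, ?_⟩
      have h1 : (c' - c) ≠ 0 := sub_ne_zero.mpr (Ne.symm hcc)
      have h2 : C (c' - c)⁻¹ * (X ^ m - C c) + -C (c' - c)⁻¹ * (X ^ m - C c')
          = C ((c' - c)⁻¹ * (c' - c)) := by
        rw [C_mul, C_sub]; ring
      rw [h2, inv_mul_cancel₀ h1, C_1]
    · intro c hc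
      refine Polynomial.separable_X_pow_sub_C c ?_ ?_
      · exact_mod_cast Nat.cast_ne_zero.mpr hm.ne'
      · simp only [hs, Finset.mem_image, Finset.mem_univ, true_and] at hc
        obtain ⟨i, hi⟩ := hc; exact hi ▸ hv i
  have hfactor : ∀ c : ℂ, aeval B (X ^ m - C c)
      = Matrix.diagonalRingHom (Fin n) ℂ (v - fun _ => c) := by
    intro c
    rw [_root_.map_sub, _root_.map_pow, aeval_X, aeval_C, hBm]
    ext i j
    by_cases hij : i = j <;>
      simp [Matrix.algebraMap_eq_diagonal, hij,
        Matrix.diagonal_apply_ne, Matrix.diagonal_apply_eq]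
  have hprod : ∀ s' : Finset ℂ, aeval B (∏ c ∈ s', (X ^ m - C c))
      = Matrix.diagonalRingHom (Fin n) ℂ (∏ c ∈ s', (v - fun _ => c)) := by
    intro s'
    induction s' using Finset.induction with
    | empty =>
      rw [Finset.prod_empty, Finset.prod_empty, _root_.map_one, _root_.map_one]
    | insert _ _ hc ih =>
      rw [Finset.prod_insert hc, Finset.prod_insert hc, _root_.map_mul, _root_.map_mul,
        hfactor, ih]
  have haev : aeval B p = 0 := by
    have h4 : (∏ c ∈ s, (v - fun _ => c)) = 0 := by
      funext j
      rw [Finset.prod_apply]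
      refine Finset.prod_eq_zero (Finset.mem_image_of_mem v (Finset.mem_univ j)) ?_
      simp
    rw [hp, hprod s, h4, _root_.map_zero]
  set f : Module.End ℂ (Fin n → ℂ) := Matrix.toLinAlgEquiv' B with hf
  have hfp : aeval f p = 0 := by
    have h5 := Polynomial.aeval_algHom_apply
      (Matrix.toLinAlgEquiv' (R := ℂ) (n := Fin n)).toAlgHom B p
    rw [haev, _root_.map_zero] at h5
    exact h5
  have hss : f.IsSemisimple :=
    Module.End.isSemisimple_of_squarefree_aeval_eq_zero hsep.squarefree hfp
  have h2 : ∀ μ : ℂ, f.maxGenEigenspace μ = f.eigenspace μ :=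
    fun μ => hss.isFinitelySemisimple.maxGenEigenspace_eq_eigenspace μ
  have h1 : ⨆ μ : ℂ, f.eigenspace μ = ⊤ := by
    have := Module.End.iSup_maxGenEigenspace_eq_top f
    simpa only [h2] using this
  have hint : DirectSum.IsInternal (fun μ : ℂ => f.eigenspace μ) :=
    (DirectSum.isInternal_submodule_iff_iSupIndep_and_iSup_eq_top _).mpr
      ⟨f.eigenspaces_iSupIndep, h1⟩
  let w : ∀ μ : ℂ, Basis (Module.Free.ChooseBasisIndex ℂ (f.eigenspace μ)) ℂ (f.eigenspace μ) :=
    fun μ => Module.Free.chooseBasis ℂ (f.eigenspace μ)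
  let b := hint.collectedBasis w
  let e := b.indexEquiv (Pi.basisFun ℂ (Fin n))
  let cb := b.reindex e
  let d : Fin n → ℂ := fun i => (e.symm i).1
  have heig : ∀ i, f (cb i) = d i • cb i := by
    intro i
    have hmem : (b (e.symm i) : Fin n → ℂ) ∈ f.eigenspace (e.symm i).1 :=
      hint.collectedBasis_mem w _
    have := (Module.End.mem_eigenspace_iff).mp hmem
    simpa [cb, Basis.reindex_apply, d] using this
  have hD : LinearMap.toMatrix cb cb f = Matrix.diagonal d := by
    ext i j
    rw [LinearMap.toMatrix_apply, heig, _root_.map_smul, Basis.repr_self]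
    by_cases hij : i = j
    · subst hij; simp [Matrix.diagonal_apply_eq]
    · simp [Matrix.diagonal_apply_ne _ hij, Finsupp.single_apply, Ne.symm hij]
  set std := Pi.basisFun ℂ (Fin n) with hstd
  have hchg : std.toMatrix cb * LinearMap.toMatrix cb cb f * cb.toMatrix std
      = LinearMap.toMatrix std std f :=
    basis_toMatrix_mul_linearMap_toMatrix_mul_basis_toMatrix std cb std cb f
  have hBf : LinearMap.toMatrix std std f = B := by
    rw [hstd, LinearMap.toMatrix_eq_toMatrix']
    exact LinearMap.toMatrix'_toLin' B
  set T := cb.toMatrix std with hT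
  set Q := std.toMatrix cb with hQ
  have hQT : Q * T = 1 := Basis.toMatrix_mul_toMatrix_flip std cb
  have hTQ : T * Q = 1 := Basis.toMatrix_mul_toMatrix_flip cb std
  have hTinv : T⁻¹ = Q := Matrix.inv_eq_left_inv hQT
  refine ⟨T, d, ⟨⟨T, Q, hTQ, hQT⟩, rfl⟩, ?_⟩
  rw [hTinv, ← hBf, ← hchg, hD]

theorem invertible_similar_weightedPerm_iff_diagonalizable {n : ℕ}
    (A : Matrix (Fin n) (Fin n) ℂ) (hA : IsUnit A) :
    (∃ (S B : Matrix (Fin n) (Fin n) ℂ), IsUnit S ∧ IsWeightedPerm B ∧ A = S⁻¹ * B * S) ↔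
    (∃ (S : Matrix (Fin n) (Fin n) ℂ) (d : Fin n → ℂ),
      IsUnit S ∧ A = S⁻¹ * Matrix.diagonal d * S) := by
  constructor
  · rintro ⟨S, B, hS, hWP, hAB⟩
    have hBu : IsUnit B := by
      have h0 := (Matrix.isUnit_iff_isUnit_det A).mp hA
      rw [hAB, Matrix.det_mul, Matrix.det_mul] at h0
      exact (Matrix.isUnit_iff_isUnit_det B).mpr
        (isUnit_of_mul_isUnit_right (isUnit_of_mul_isUnit_left h0))
    obtain ⟨m, v, hm, hv, hBm⟩ := wp_pow_diagonal B hBu hWP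
    obtain ⟨T, d, hT, hTB⟩ := pow_diag_diagonalizable B m v hm hv hBm
    refine ⟨T * S, d, hT.mul hS, ?_⟩
    rw [Matrix.mul_inv_rev, hAB, hTB]
    simp [Matrix.mul_assoc]
  · rintro ⟨S, d, hS, hAd⟩
    have key : ∀ i j, Matrix.diagonal d i j ≠ 0 → i = j := fun i j h =>
      by_contra fun hne => h (Matrix.diagonal_apply_ne d hne)
    exact ⟨S, Matrix.diagonal d, hS,
      ⟨fun i j₁ j₂ h1 h2 => (key i j₁ h1).symm.trans (key i j₂ h2),
       fun j i₁ i₂ h1 h2 => (key i₁ j h1).trans (key i₂ j h2).symm⟩, hAd⟩
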